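/- Let k be a field, V a finite-dimensional k-vector space, E = ⋀V, and S = Sym(V^*). Let A = E/I be a finite-dimensional cohomologically graded quotient of E with socle degree n (i.e., A^n ≠ 0 and A^j = 0 for j > n) having the EPY property. Then dim_k A^i ≥ C(n, i) (the binomial coefficient) for all 0 ≤ i ≤ n. -/

import Mathlib

open TensorProduct

/-- Left multiplication by the degree-one element `ι a ∈ ⋀V` corresponding to `a ∈ V`,
as a `k`-linear endomorphism of the `⋀V`-module `P`. -/
noncomputable def extMul (k : Type) [Field k] (V : Type) [AddCommGroup V] [Module k V]
    (P : Type) [AddCommGroup P] [Module k P]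
    [Module (ExteriorAlgebra k V) P] [IsScalarTower k (ExteriorAlgebra k V) P]
    (a : V) : P →ₗ[k] P where
  toFun p := ExteriorAlgebra.ι k a • p
  map_add' := smul_add _
  map_smul' c p := smul_comm _ c p

/-- The differential of the linear complex `L(P) = (P_• ⊗ S, d)` of free modules over the
polynomial ring `S = k[x_j : j ∈ ι] = Sym(V^*)` (where `V` has basis `(e_j)_{j ∈ ι}` and
`(x_j)` is the dual basis), given on the graded piece `P_i ⊗ S` by
`d(p ⊗ s) = ∑_j (e_j · p) ⊗ (x_j · s)`, assembled as a single `S`-linear endomorphism of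
`S ⊗_k P`. -/
noncomputable def bggDifferential (k : Type) [Field k]
    (ι : Type) [Fintype ι] [DecidableEq ι]
    (V : Type) [AddCommGroup V] [Module k V] (b : Module.Basis ι k V)
    (P : Type) [AddCommGroup P] [Module k P]
    [Module (ExteriorAlgebra k V) P] [IsScalarTower k (ExteriorAlgebra k V) P] :
    (MvPolynomial ι k ⊗[k] P) →ₗ[MvPolynomial ι k] (MvPolynomial ι k ⊗[k] P) :=
  ∑ j : ι, TensorProduct.AlgebraTensorModule.map
    (LinearMap.lsmul (MvPolynomial ι k) (MvPolynomial ι k) (MvPolynomial.X j))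
    (extMul k V P (b j))

section Aux

variable (k : Type) [Field k] {V : Type} [AddCommGroup V] [Module k V]

/-- The product `ι x₁ * ι x₂ * ⋯ * ι xₘ` in the exterior algebra, for a list of vectors. -/
noncomputable def prodIota (l : List V) : ExteriorAlgebra k V :=
  (l.map (ExteriorAlgebra.ι k)).prod

@[simp] theorem prodIota_nil : prodIota k ([] : List V) = 1 := rfl

@[simp] theorem prodIota_cons (x : V) (l : List V) :
    prodIota k (x :: l) = ExteriorAlgebra.ι k x * prodIota k l := by
  simp [prodIota]

theorem prodIota_append (l₁ l₂ : List V) :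
    prodIota k (l₁ ++ l₂) = prodIota k l₁ * prodIota k l₂ := by
  simp [prodIota]

theorem iota_anticomm (x y : V) :
    ExteriorAlgebra.ι k x * ExteriorAlgebra.ι k y
      = -(ExteriorAlgebra.ι k y * ExteriorAlgebra.ι k x) := by
  have h := ExteriorAlgebra.ι_sq_zero (R := k) (x + y)
  rw [map_add] at h
  simp only [add_mul, mul_add, ExteriorAlgebra.ι_sq_zero, zero_add, add_zero] at h
  exact eq_neg_of_add_eq_zero_right h

theorem prodIota_perm {l₁ l₂ : List V} (h : l₁.Perm l₂) :
    prodIota k l₁ = prodIota k l₂ ∨ prodIota k l₁ = -prodIota k l₂ := by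
  induction h with
  | nil => exact Or.inl rfl
  | cons x _ ih =>
      rcases ih with h' | h'
      · exact Or.inl (by rw [prodIota_cons, prodIota_cons, h'])
      · exact Or.inr (by rw [prodIota_cons, prodIota_cons, h', mul_neg])
  | swap x y l =>
      refine Or.inr ?_
      rw [prodIota_cons, prodIota_cons, prodIota_cons, prodIota_cons, ← mul_assoc, ← mul_assoc,
        iota_anticomm k y x, neg_mul]
  | trans _ _ ih₁ ih₂ =>
      rcases ih₁ with h₁ | h₁ <;> rcases ih₂ with h₂ | h₂
      · exact Or.inl (h₁.trans h₂)
      · exact Or.inr (h₁.trans h₂)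
      · exact Or.inr (by rw [h₁, h₂])
      · exact Or.inl (by rw [h₁, h₂, neg_neg])

theorem prodIota_eq_zero_of_not_nodup {l : List V} (h : ¬ l.Nodup) : prodIota k l = 0 := by
  classical
  induction l with
  | nil => exact absurd List.nodup_nil h
  | cons x t ih =>
      rw [List.nodup_cons] at h
      push_neg at h
      by_cases hx : x ∈ t
      · have hperm : (x :: t).Perm (x :: x :: t.erase x) :=
          (List.perm_cons_erase hx).cons x
        rcases prodIota_perm k hperm with h' | h' <;>
          · rw [h']
            simp [prodIota_cons, ← mul_assoc, ExteriorAlgebra.ι_sq_zero]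
      · rw [prodIota_cons, ih (h hx), mul_zero]

end Aux

/-- **Statement 11.** Let `A = E/I` be a finite-dimensional cyclic graded module over the
exterior algebra `E = ⋀V` (graded cohomologically, so the internal homological grading
`Agr : ℤ → Submodule k A` has `A^c = Agr (-c)`, with `V` acting in degree `-1` and the
cyclic generator in degree `0`), with socle degree `n` (`A^n ≠ 0` and `A^j = 0` for `j > n`).
If `A` has the EPY property (`H_i(L(A(-n))) = 0` for `i ≠ 0`, i.e. vanishing of
`H_j(L(A))` for `j ≠ -n` in the unshifted grading), then `dim_k A^i ≥ C(n,i)` for all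
`0 ≤ i ≤ n`. -/
theorem stmt11 (k : Type) [Field k] (ι : Type) [Fintype ι] [DecidableEq ι]
    (V : Type) [AddCommGroup V] [Module k V] (b : Module.Basis ι k V)
    (A : Type) [AddCommGroup A] [Module k A]
    [Module (ExteriorAlgebra k V) A] [IsScalarTower k (ExteriorAlgebra k V) A]
    [FiniteDimensional k A]
    (Agr : ℤ → Submodule k A)
    (hgrading : DirectSum.IsInternal Agr)
    (hdeg : ∀ (a : V) (i : ℤ), Submodule.map (extMul k V A a) (Agr i) ≤ Agr (i - 1))
    (hcyclic : ∃ v : A, v ∈ Agr 0 ∧ Submodule.span (ExteriorAlgebra k V) {v} = ⊤)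
    (hhigh : ∀ i : ℤ, 0 < i → Agr i = ⊥)
    (n : ℕ)
    (hsocle : Agr (-(n : ℤ)) ≠ ⊥)
    (hbot : ∀ i : ℤ, i < -(n : ℤ) → Agr i = ⊥)
    (hEPY : ∀ i : ℤ, i ≠ -(n : ℤ) →
      Submodule.baseChange (MvPolynomial ι k) (Agr i) ⊓
          LinearMap.ker (bggDifferential k ι V b A) ≤
        Submodule.map (bggDifferential k ι V b A)
          (Submodule.baseChange (MvPolynomial ι k) (Agr (i + 1))))
    (i : ℕ) (hin : i ≤ n) :
    n.choose i ≤ Module.finrank k (Agr (-(i : ℤ))) := by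
  classical
  obtain ⟨v, hv0, hvtop⟩ := hcyclic
  -- products of `ι`s lower the degree
  have hgr : ∀ (l : List V) (d : ℤ) (p : A), p ∈ Agr d →
      prodIota k l • p ∈ Agr (d - l.length) := by
    intro l
    induction l with
    | nil => intro d p hp; simpa using hp
    | cons x t ih =>
        intro d p hp
        have h1 : prodIota k t • p ∈ Agr (d - t.length) := ih d p hp
        have h2 : ExteriorAlgebra.ι k x • (prodIota k t • p) ∈ Agr (d - t.length - 1) :=
          hdeg x (d - t.length) ⟨_, h1, rfl⟩
        have harith : d - ((x :: t).length : ℤ) = d - (t.length : ℤ) - 1 := by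
          push_cast [List.length_cons]; ring
        rw [prodIota_cons, mul_smul, harith]
        exact h2
  -- the module is spanned over `k` by products of basis vectors applied to `v`
  set W : Submodule k A :=
    Submodule.span k {y : A | ∃ l : List ι, y = prodIota k (l.map b) • v} with hWdef
  have hgen : ∀ (j : ι) (p : A), p ∈ W → ExteriorAlgebra.ι k (b j) • p ∈ W := by
    intro j p hp
    induction hp using Submodule.span_induction with
    | mem y hy =>
        obtain ⟨l, rfl⟩ := hy
        exact Submodule.subset_span ⟨j :: l, by rw [List.map_cons, prodIota_cons, mul_smul]⟩
    | zero => rw [smul_zero]; exact W.zero_mem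
    | add y z _ _ hy hz => rw [smul_add]; exact W.add_mem hy hz
    | smul c y _ hy => rw [smul_comm]; exact W.smul_mem c hy
  have hgenV : ∀ (x : V) (p : A), p ∈ W → ExteriorAlgebra.ι k x • p ∈ W := by
    intro x p hp
    have hx : ExteriorAlgebra.ι k x
        = ∑ j, b.repr x j • ExteriorAlgebra.ι k (b j) := by
      conv_lhs => rw [← b.sum_repr x]
      rw [map_sum]
      simp
    rw [hx, Finset.sum_smul]
    exact Submodule.sum_mem _ fun j _ => by
      rw [smul_assoc]; exact W.smul_mem _ (hgen j p hp)
  have hact : ∀ ξ : ExteriorAlgebra k V, ∀ p ∈ W, ξ • p ∈ W := by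
    intro ξ
    induction ξ using ExteriorAlgebra.induction with
    | algebraMap r => intro p hp; rw [algebraMap_smul]; exact W.smul_mem r hp
    | ι x => exact hgenV x
    | mul ξ η hξ hη => intro p hp; rw [mul_smul]; exact hξ _ (hη p hp)
    | add ξ η hξ hη => intro p hp; rw [add_smul]; exact W.add_mem (hξ p hp) (hη p hp)
  have hvW : v ∈ W := Submodule.subset_span ⟨[], by simp⟩
  have hWtop : ∀ x : A, x ∈ W := by
    intro x
    have hx : x ∈ Submodule.span (ExteriorAlgebra k V) {v} := by rw [hvtop]; trivial
    obtain ⟨ξ, rfl⟩ := Submodule.mem_span_singleton.mp hx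
    exact hact ξ v hvW
  -- there is a list of length `n` of basis vectors whose product does not kill `v`
  have hexists : ∃ l : List ι, l.length = n ∧ prodIota k (l.map b) • v ≠ 0 := by
    by_contra hno
    push_neg at hno
    apply hsocle
    have hproj : ∀ x : A, x ∈ W →
        ((LinearEquiv.ofBijective (DirectSum.coeLinearMap Agr) hgrading).symm x) (-(n : ℤ))
          = 0 := by
      intro x hx
      induction hx using Submodule.span_induction with
      | mem y hy =>
          obtain ⟨l, rfl⟩ := hy
          by_cases hlen : l.length = n
          · rw [hno l hlen, map_zero]
            simp
          · have hmem : prodIota k (l.map b) • v ∈ Agr (-(l.length : ℤ)) := by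
              have := hgr (l.map b) 0 v hv0
              simpa using this
            have hne : (-(l.length : ℤ)) ≠ (-(n : ℤ)) := by
              simpa using fun h => hlen (by exact_mod_cast h)
            exact hgrading.ofBijective_coeLinearMap_of_mem_ne hne hmem
      | zero => rw [map_zero]; simp
      | add y z _ _ hy hz => rw [map_add]; simp [DirectSum.add_apply, hy, hz]
      | smul c y _ hy => rw [map_smul]; simp [DirectSum.smul_apply, hy]
    rw [Submodule.eq_bot_iff]
    intro x hx
    have h1 := hgrading.ofBijective_coeLinearMap_of_mem hx
    rw [hproj x (hWtop x)] at h1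
    have h2 := congrArg (Subtype.val) h1
    simpa using h2.symm
  obtain ⟨l, hlen, hlv⟩ := hexists
  set L : List V := l.map b with hLdef
  have hLlen : L.length = n := by rw [hLdef, List.length_map, hlen]
  subst hLlen
  -- the family of products over subsets of positions
  let P : Finset (Fin L.length) → ExteriorAlgebra k V :=
    fun T => prodIota k ((T.sort (· ≤ ·)).map L.get)
  have hPapply : ∀ T : Finset (Fin L.length),
      P T = prodIota k ((T.sort (· ≤ ·)).map L.get) := fun T => rfl
  have hPlen : ∀ T : Finset (Fin L.length), ((T.sort (· ≤ ·)).map L.get).length = T.card := by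
    intro T; rw [List.length_map, Finset.length_sort]
  have hPmem : ∀ T : Finset (Fin L.length), P T • v ∈ Agr (-(T.card : ℤ)) := by
    intro T
    have := hgr ((T.sort (· ≤ ·)).map L.get) 0 v hv0
    rw [hPlen T] at this
    simpa using this
  -- the full product is nonzero on `v`
  have hfullperm : ((Finset.univ : Finset (Fin L.length)).sort (· ≤ ·)).map L.get |>.Perm L := by
    have h1 : ((Finset.univ : Finset (Fin L.length)).sort (· ≤ ·)).Perm
        (List.finRange L.length) := by
      rw [List.perm_ext_iff_of_nodup (Finset.sort_nodup _ _) (List.nodup_finRange _)]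
      intro a
      simp [Finset.mem_sort, List.mem_finRange]
    have := h1.map L.get
    rwa [List.map_get_finRange] at this
  have hfull : P Finset.univ • v ≠ 0 := by
    rcases prodIota_perm k hfullperm with h' | h'
    · rw [hPapply, h']; exact hlv
    · rw [hPapply, h', neg_smul, neg_ne_zero]; exact hlv
  -- products over intersecting subsets vanish
  have hkill : ∀ S T : Finset (Fin L.length), (S ∩ T).Nonempty → P S * P T = 0 := by
    intro S T hST
    obtain ⟨t, ht⟩ := hST
    rw [Finset.mem_inter] at ht
    rw [hPapply, hPapply, ← prodIota_append]
    apply prodIota_eq_zero_of_not_nodup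
    intro hnd
    rw [List.nodup_append] at hnd
    exact hnd.2.2 _ (List.mem_map_of_mem (f := L.get) ((Finset.mem_sort _).2 ht.1))
      _ (List.mem_map_of_mem (f := L.get) ((Finset.mem_sort _).2 ht.2)) rfl
  -- product over a set and its complement is (up to sign) the full product
  have hcompl : ∀ T : Finset (Fin L.length),
      P Tᶜ * P T = P Finset.univ ∨ P Tᶜ * P T = -P Finset.univ := by
    intro T
    have hdisj : ∀ a : Fin L.length, a ∈ Tᶜ.sort (· ≤ ·) → a ∉ T.sort (· ≤ ·) := by
      intro a ha hb
      rw [Finset.mem_sort] at ha hb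
      exact (Finset.mem_compl.1 ha) hb
    have hperm : ((Tᶜ.sort (· ≤ ·)) ++ (T.sort (· ≤ ·))).Perm
        ((Finset.univ : Finset (Fin L.length)).sort (· ≤ ·)) := by
      rw [List.perm_ext_iff_of_nodup ?_ (Finset.sort_nodup _ _)]
      · intro a
        simp only [List.mem_append, Finset.mem_sort, Finset.mem_compl, Finset.mem_univ,
          iff_true]
        tauto
      · rw [List.nodup_append]
        exact ⟨Finset.sort_nodup _ _, Finset.sort_nodup _ _, fun a ha c hc hac => hdisj a ha (hac ▸ hc)⟩
    have hperm' := hperm.map L.get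
    rw [List.map_append] at hperm'
    have hor := prodIota_perm k hperm'
    rw [prodIota_append] at hor
    rw [hPapply, hPapply, hPapply]
    exact hor
  -- linear independence of the subset products acting on `v`
  have hindepA : LinearIndependent k
      (fun T : (Finset.powersetCard i (Finset.univ : Finset (Fin L.length))) =>
        P (T : Finset (Fin L.length)) • v) := by
    rw [Fintype.linearIndependent_iff]
    intro g hg T₀
    have hg' := congrArg (fun z : A => P ((T₀ : Finset (Fin L.length)))ᶜ • z) hg
    simp only [Finset.smul_sum, smul_zero] at hg'
    have hterm : ∀ T : (Finset.powersetCard i (Finset.univ : Finset (Fin L.length))),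
        T ≠ T₀ →
        P ((T₀ : Finset (Fin L.length)))ᶜ • (g T • (P (T : Finset (Fin L.length)) • v)) = 0 := by
      intro T hT
      have hcardT : (T : Finset (Fin L.length)).card = i :=
        Finset.mem_powersetCard_univ.1 T.2
      have hcardT₀ : (T₀ : Finset (Fin L.length)).card = i :=
        Finset.mem_powersetCard_univ.1 T₀.2
      have hne : ((T₀ : Finset (Fin L.length))ᶜ ∩ (T : Finset (Fin L.length))).Nonempty := by
        by_contra hempty
        rw [Finset.not_nonempty_iff_eq_empty] at hempty
        have hsub : (T : Finset (Fin L.length)) ⊆ (T₀ : Finset (Fin L.length)) := by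
          intro a ha
          by_contra hnot
          have : a ∈ (T₀ : Finset (Fin L.length))ᶜ ∩ (T : Finset (Fin L.length)) :=
            Finset.mem_inter.2 ⟨Finset.mem_compl.2 hnot, ha⟩
          rw [hempty] at this
          exact absurd this (Finset.notMem_empty a)
        have : (T : Finset (Fin L.length)) = (T₀ : Finset (Fin L.length)) :=
          Finset.eq_of_subset_of_card_le hsub (by rw [hcardT, hcardT₀])
        exact hT (Subtype.ext this)
      rw [smul_comm, smul_smul, hkill _ _ hne, zero_smul, smul_zero]
    rw [Finset.sum_eq_single T₀ (fun T _ hT => hterm T hT) (by intro h; exact absurd (Finset.mem_univ T₀) h)] at hg'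
    rw [smul_comm, smul_smul] at hg'
    rcases hcompl (T₀ : Finset (Fin L.length)) with h' | h' <;> rw [h'] at hg'
    · exact (smul_eq_zero.1 hg').resolve_right hfull
    · rw [neg_smul, smul_neg, neg_eq_zero] at hg'
      exact (smul_eq_zero.1 hg').resolve_right hfull
  -- package into the submodule `Agr (-i)`
  have hmem' : ∀ T : (Finset.powersetCard i (Finset.univ : Finset (Fin L.length))),
      P (T : Finset (Fin L.length)) • v ∈ Agr (-(i : ℤ)) := by
    intro T
    have hcardT : (T : Finset (Fin L.length)).card = i :=
      Finset.mem_powersetCard_univ.1 T.2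
    have := hPmem (T : Finset (Fin L.length))
    rwa [hcardT] at this
  have hindep : LinearIndependent k
      (fun T : (Finset.powersetCard i (Finset.univ : Finset (Fin L.length))) =>
        (⟨P (T : Finset (Fin L.length)) • v, hmem' T⟩ : Agr (-(i : ℤ)))) := by
    apply LinearIndependent.of_comp (Agr (-(i : ℤ))).subtype
    exact hindepA
  have hcard := hindep.fintype_card_le_finrank
  rwa [Fintype.card_coe, Finset.card_powersetCard, Finset.card_univ, Fintype.card_fin] at hcard
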